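/- Define p̃(d) = (1 + B(d−1, 1/2)/B((d−1)/2, 1/2))^{−1}. Then p̃ is a decreasing function of d for d ≥ 3, p̃(3) = 3/5, and p̃(d) → (1 + 1/√2)^{−1} as d → ∞. -/

import Mathlib

open MeasureTheory Matrix Real RealInnerProductSpace

noncomputable def frobNorm {d : ℕ} (A : Matrix (Fin d) (Fin d) ℝ) : ℝ :=
  Real.sqrt (∑ i, ∑ j, A i j ^ 2)

noncomputable def nuclearNorm {d : ℕ} (A : Matrix (Fin d) (Fin d) ℝ) : ℝ :=
  ∑ i, Real.sqrt (((show (Aᵀ * A).IsHermitian by simpa using Matrix.isHermitian_conjTranspose_mul_self A)).eigenvalues i)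

/-- `μ` is the uniform (rotation-invariant) probability distribution on the unit
sphere `S^{d-1} ⊂ ℝ^d`. -/
def IsUniformOnSphere {d : ℕ} (μ : Measure (EuclideanSpace ℝ (Fin d))) : Prop :=
  IsProbabilityMeasure μ ∧ (∀ᵐ x ∂μ, ‖x‖ = 1) ∧
  ∀ Q : Matrix (Fin d) (Fin d) ℝ, Qᵀ * Q = 1 →
    Measure.map (fun x => Matrix.toEuclideanLin Q x) μ = μ

/-- The Beta function. -/
noncomputable def Beta (m n : ℝ) : ℝ := Real.Gamma m * Real.Gamma n / Real.Gamma (m + n)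

noncomputable def ptilde (d : ℕ) : ℝ :=
  (1 + Beta ((d : ℝ) - 1) (1/2) / Beta (((d : ℝ) - 1)/2) (1/2))⁻¹

def A2 : Matrix (Fin 2) (Fin 2) ℝ := !![0, -1; 1, 0]

noncomputable def rot2 (θ : ℝ) : Matrix (Fin 2) (Fin 2) ℝ :=
  !![Real.cos θ, -Real.sin θ; Real.sin θ, Real.cos θ]

section Helpers
open Filter

noncomputable def gr (x : ℝ) : ℝ := Real.Gamma (x + 1/2) / Real.Gamma x

lemma gr_pos {x : ℝ} (hx : 0 < x) : 0 < gr x :=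
  div_pos (Real.Gamma_pos_of_pos (by linarith)) (Real.Gamma_pos_of_pos hx)

lemma gr_mul {x : ℝ} (hx : 0 < x) : gr (x + 1/2) * gr x = x := by
  have h1 : Real.Gamma x ≠ 0 := (Real.Gamma_pos_of_pos hx).ne'
  have h2 : Real.Gamma (x + 1/2) ≠ 0 := (Real.Gamma_pos_of_pos (by linarith)).ne'
  have h3 : x + 1/2 + 1/2 = x + 1 := by ring
  unfold gr
  rw [h3, Real.Gamma_add_one hx.ne']
  field_simp

lemma Gamma_sq_le {x : ℝ} (hx : 0 < x) :
    Real.Gamma (x + 1/2) ^ 2 ≤ Real.Gamma x * Real.Gamma (x + 1) := by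
  have hx1 : (0:ℝ) < x + 1 := by linarith
  have hxh : (0:ℝ) < x + 1/2 := by linarith
  have h := Real.convexOn_log_Gamma.2 (Set.mem_Ioi.2 hx) (Set.mem_Ioi.2 hx1)
    (by norm_num : (0:ℝ) ≤ 1/2) (by norm_num : (0:ℝ) ≤ 1/2) (by norm_num)
  simp only [smul_eq_mul, Function.comp_apply] at h
  have harg : (1/2 : ℝ) * x + (1/2) * (x + 1) = x + 1/2 := by ring
  rw [harg] at h
  have hlog : Real.log (Real.Gamma (x + 1/2) ^ 2) ≤
      Real.log (Real.Gamma x * Real.Gamma (x + 1)) := by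
    rw [Real.log_pow, Real.log_mul (Real.Gamma_pos_of_pos hx).ne'
      (Real.Gamma_pos_of_pos hx1).ne']
    push_cast
    linarith
  exact (Real.log_le_log_iff (by positivity) (by positivity)).mp hlog

lemma gr_le {x : ℝ} (hx : 0 < x) : gr x ≤ gr (x + 1/2) := by
  have h1 : (0:ℝ) < Real.Gamma x := Real.Gamma_pos_of_pos hx
  have h2 : (0:ℝ) < Real.Gamma (x + 1/2) := Real.Gamma_pos_of_pos (by linarith)
  have h3 : x + 1/2 + 1/2 = x + 1 := by ring
  unfold gr
  rw [h3]
  rw [div_le_div_iff₀ h1 h2]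
  nlinarith [Gamma_sq_le hx]

lemma gr_sq_le {x : ℝ} (hx : 0 < x) : gr x ^ 2 ≤ x := by
  have h := gr_mul hx
  nlinarith [gr_le hx, gr_pos hx]

lemma gr_sq_ge {x : ℝ} (hx : 1/2 < x) : x - 1/2 ≤ gr x ^ 2 := by
  have h0 : (0:ℝ) < x - 1/2 := by linarith
  have h := gr_mul h0
  have h2 : x - 1/2 + 1/2 = x := by ring
  rw [h2] at h
  nlinarith [gr_le h0, gr_pos h0, gr_pos (by linarith : (0:ℝ) < x), h2 ▸ gr_le h0]

lemma gr_add_one {x : ℝ} (hx : 0 < x) : gr (x + 1) = (x + 1/2) / x * gr x := by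
  have h1 : Real.Gamma x ≠ 0 := (Real.Gamma_pos_of_pos hx).ne'
  have h3 : x + 1 + 1/2 = (x + 1/2) + 1 := by ring
  unfold gr
  rw [h3, Real.Gamma_add_one (by positivity : x + (1:ℝ)/2 ≠ 0), Real.Gamma_add_one hx.ne']
  field_simp

lemma gr_key {x : ℝ} (hx : 1 ≤ x) : x - 1/4 < gr x ^ 2 := by
  have h0 : (0:ℝ) < x := by linarith
  set a : ℕ → ℝ := fun n => gr (x + n) ^ 2 / (x + n - 1/4) with ha
  have hden : ∀ n : ℕ, (0:ℝ) < x + n - 1/4 := by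
    intro n
    have : (0:ℝ) ≤ (n:ℝ) := Nat.cast_nonneg n
    linarith
  have hposn : ∀ n : ℕ, (0:ℝ) < x + n := fun n => by linarith [hden n]
  have hstep : ∀ n, a (n + 1) < a n := by
    intro n
    set y : ℝ := x + n with hy
    have hy0 : (0:ℝ) < y := hposn n
    have hcast : x + ((n:ℕ)+1:ℕ) = y + 1 := by push_cast; ring
    have hgr : gr (y + 1) = (y + 1/2) / y * gr y := gr_add_one hy0
    have hgp : (0:ℝ) < gr y := gr_pos hy0
    simp only [ha, hcast]
    rw [hgr]
    have hd1 : (0:ℝ) < y + 1 - 1/4 := by linarith [hden (n+1), hcast]; 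
    have hd0 : (0:ℝ) < y - 1/4 := hden n
    rw [div_lt_div_iff₀ (by linarith) hd0]
    have expand : ((y + 1/2) / y * gr y) ^ 2 = (y + 1/2)^2 / y^2 * gr y ^ 2 := by
      field_simp
    rw [expand]
    rw [div_mul_eq_mul_div, div_mul_eq_mul_div, div_lt_iff₀ (by positivity)]
    nlinarith [sq_nonneg (gr y), hgp, sq_nonneg y]
  have hanti : StrictAnti a := strictAnti_nat_of_succ_lt hstep
  have hT : Tendsto (fun n : ℕ => x - 1/4 + (n:ℝ)) atTop atTop :=
    tendsto_atTop_add_const_left _ _ tendsto_natCast_atTop_atTop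
  have hT' : Tendsto (fun n : ℕ => x + (n:ℝ) - 1/4) atTop atTop := by
    refine hT.congr fun n => by ring
  have hinv : Tendsto (fun n : ℕ => (x + (n:ℝ) - 1/4)⁻¹) atTop (nhds 0) :=
    hT'.inv_tendsto_atTop
  have hlow : Tendsto (fun n : ℕ => 1 - (1/4) * (x + (n:ℝ) - 1/4)⁻¹) atTop (nhds 1) := by
    have := (tendsto_const_nhds (x := (1:ℝ)) (f := atTop)).sub (hinv.const_mul (1/4))
    simpa using this
  have hup : Tendsto (fun n : ℕ => 1 + (1/4) * (x + (n:ℝ) - 1/4)⁻¹) atTop (nhds 1) := by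
    have := (tendsto_const_nhds (x := (1:ℝ)) (f := atTop)).add (hinv.const_mul (1/4))
    simpa using this
  have hle1 : ∀ n : ℕ, 1 - (1/4) * (x + (n:ℝ) - 1/4)⁻¹ ≤ a n := by
    intro n
    have h1 : x + n - 1/2 ≤ gr (x + n) ^ 2 :=
      gr_sq_ge (by linarith [hposn n, (Nat.cast_nonneg n : (0:ℝ) ≤ n)])
    have hne : x + (n:ℝ) - 1/4 ≠ 0 := (hden n).ne'
    have h2 : 1 - (1/4) * (x + (n:ℝ) - 1/4)⁻¹ = (x + n - 1/2) / (x + n - 1/4) := by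
      rw [eq_div_iff hne, sub_mul, one_mul, mul_assoc, inv_mul_cancel₀ hne]
      ring
    rw [h2]
    show _ ≤ gr (x + n) ^ 2 / (x + n - 1/4)
    exact div_le_div_of_nonneg_right h1 (hden n).le
  have hle2 : ∀ n : ℕ, a n ≤ 1 + (1/4) * (x + (n:ℝ) - 1/4)⁻¹ := by
    intro n
    have h1 : gr (x + n) ^ 2 ≤ x + n := gr_sq_le (hposn n)
    have hne : x + (n:ℝ) - 1/4 ≠ 0 := (hden n).ne'
    have h2 : 1 + (1/4) * (x + (n:ℝ) - 1/4)⁻¹ = (x + n) / (x + n - 1/4) := by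
      rw [eq_div_iff hne, add_mul, one_mul, mul_assoc, inv_mul_cancel₀ hne]
      ring
    rw [h2]
    show gr (x + n) ^ 2 / (x + n - 1/4) ≤ _
    exact div_le_div_of_nonneg_right h1 (hden n).le
  have hlim : Tendsto a atTop (nhds 1) :=
    tendsto_of_tendsto_of_tendsto_of_le_of_le hlow hup hle1 hle2
  have h1le : (1:ℝ) ≤ a 1 := by
    refine le_of_tendsto hlim ?_
    filter_upwards [eventually_ge_atTop 1] with n hn
    exact hanti.antitone hn
  have ha0 : 1 < a 0 := lt_of_le_of_lt h1le (hstep 0)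
  have hx4 : (0:ℝ) < x - 1/4 := by linarith
  have hfin : 1 < gr (x + (0:ℕ)) ^ 2 / (x + (0:ℕ) - 1/4) := ha0
  rw [one_lt_div (by simpa using hx4)] at hfin
  simpa using hfin

noncomputable def rr (d : ℕ) : ℝ := gr (((d:ℝ) - 1) / 2) / gr ((d:ℝ) - 1)

lemma Beta_half {m : ℝ} (hm : 0 < m) : Beta m (1/2) = Real.Gamma (1/2) / gr m := by
  unfold Beta gr
  rw [div_div_eq_mul_div, mul_comm (Real.Gamma m)]

lemma rr_pos {d : ℕ} (hd : 3 ≤ d) : 0 < rr d := by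
  have h1 : (3:ℝ) ≤ (d:ℝ) := by exact_mod_cast hd
  exact div_pos (gr_pos (by linarith)) (gr_pos (by linarith))

lemma ptilde_eq_rr {d : ℕ} (hd : 3 ≤ d) :
    Beta ((d : ℝ) - 1) (1/2) / Beta (((d : ℝ) - 1)/2) (1/2) = rr d := by
  have h1 : (3:ℝ) ≤ (d:ℝ) := by exact_mod_cast hd
  have hp1 : (0:ℝ) < (d:ℝ) - 1 := by linarith
  have hp2 : (0:ℝ) < ((d:ℝ) - 1) / 2 := by linarith
  rw [Beta_half hp1, Beta_half hp2]
  have hg : Real.Gamma (1/2) ≠ 0 := by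
    rw [Real.Gamma_one_half_eq]; positivity
  have g1 : gr ((d:ℝ) - 1) ≠ 0 := (gr_pos hp1).ne'
  have g2 : gr (((d:ℝ) - 1)/2) ≠ 0 := (gr_pos hp2).ne'
  unfold rr
  field_simp

lemma rr_lt {d : ℕ} (hd : 3 ≤ d) : rr d < rr (d + 1) := by
  have h1 : (3:ℝ) ≤ (d:ℝ) := by exact_mod_cast hd
  have hd1 : (0:ℝ) < (d:ℝ) - 1 := by linarith
  have hA : gr (((d:ℝ) - 1)/2 + 1/2) * gr (((d:ℝ) - 1)/2) = ((d:ℝ) - 1)/2 :=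
    gr_mul (by linarith)
  have harg : ((d:ℝ) - 1)/2 + 1/2 = (d:ℝ)/2 := by ring
  rw [harg] at hA
  have hB : gr (((d:ℝ) - 1) + 1) = (((d:ℝ) - 1) + 1/2) / ((d:ℝ) - 1) * gr ((d:ℝ) - 1) :=
    gr_add_one (by linarith)
  have hkey : (d:ℝ)/2 - 1/4 < gr ((d:ℝ)/2) ^ 2 := gr_key (by linarith)
  have p1 : (0:ℝ) < gr ((d:ℝ)/2) := gr_pos (by linarith)
  have p2 : (0:ℝ) < gr (((d:ℝ) - 1)/2) := gr_pos (by linarith)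
  have p3 : (0:ℝ) < gr ((d:ℝ) - 1) := gr_pos (by linarith)
  have p4 : (0:ℝ) < gr (((d:ℝ) - 1) + 1) := gr_pos (by linarith)
  have hcast : ((d + 1 : ℕ) : ℝ) = (d:ℝ) + 1 := by push_cast; ring
  unfold rr
  rw [hcast]
  have e1 : ((d:ℝ) + 1 - 1) / 2 = (d:ℝ)/2 := by ring
  have e2 : (d:ℝ) + 1 - 1 = ((d:ℝ) - 1) + 1 := by ring
  rw [e1, e2]
  rw [div_lt_div_iff₀ p3 p4]
  rw [hB]
  have hgrh : gr (((d:ℝ) - 1)/2) = ((d:ℝ) - 1)/2 / gr ((d:ℝ)/2) := by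
    rw [eq_div_iff p1.ne', mul_comm]
    exact hA
  rw [hgrh]
  rw [show ((d:ℝ) - 1)/2 / gr ((d:ℝ)/2) * ((((d:ℝ) - 1) + 1/2) / ((d:ℝ) - 1) * gr ((d:ℝ) - 1))
      = (((d:ℝ) - 1)/2 * (((d:ℝ) - 1) + 1/2) * gr ((d:ℝ) - 1)) / (gr ((d:ℝ)/2) * ((d:ℝ) - 1))
    from by field_simp]
  rw [div_lt_iff₀ (mul_pos p1 hd1)]
  nlinarith [hkey, mul_pos p3 hd1, p1, p2, p3]

lemma rr_le_sqrt {d : ℕ} (hd : 3 ≤ d) :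
    rr d ≤ Real.sqrt (((d:ℝ) - 1) / (2 * (d:ℝ) - 3)) := by
  have h1 : (3:ℝ) ≤ (d:ℝ) := by exact_mod_cast hd
  have p2 : (0:ℝ) < gr (((d:ℝ) - 1)/2) := gr_pos (by linarith)
  have p3 : (0:ℝ) < gr ((d:ℝ) - 1) := gr_pos (by linarith)
  have hn : gr (((d:ℝ) - 1)/2) ^ 2 ≤ ((d:ℝ) - 1)/2 := gr_sq_le (by linarith)
  have hdd : (2 * (d:ℝ) - 3)/2 ≤ gr ((d:ℝ) - 1) ^ 2 := by
    have := gr_sq_ge (x := (d:ℝ) - 1) (by linarith)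
    linarith
  have hsq : rr d ^ 2 ≤ ((d:ℝ) - 1) / (2 * (d:ℝ) - 3) := by
    unfold rr
    rw [div_pow]
    calc gr (((d:ℝ) - 1)/2) ^ 2 / gr ((d:ℝ) - 1) ^ 2
        ≤ (((d:ℝ) - 1)/2) / ((2 * (d:ℝ) - 3)/2) := by
          apply div_le_div₀ (by linarith) hn (by linarith) hdd
      _ = ((d:ℝ) - 1) / (2 * (d:ℝ) - 3) := by
          have h23 : (2*(d:ℝ)-3) ≠ 0 := by linarith
          field_simp
  calc rr d = Real.sqrt (rr d ^ 2) := (Real.sqrt_sq (rr_pos hd).le).symm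
    _ ≤ _ := Real.sqrt_le_sqrt hsq

lemma sqrt_le_rr {d : ℕ} (hd : 3 ≤ d) :
    Real.sqrt (((d:ℝ) - 2) / (2 * ((d:ℝ) - 1))) ≤ rr d := by
  have h1 : (3:ℝ) ≤ (d:ℝ) := by exact_mod_cast hd
  have p2 : (0:ℝ) < gr (((d:ℝ) - 1)/2) := gr_pos (by linarith)
  have p3 : (0:ℝ) < gr ((d:ℝ) - 1) := gr_pos (by linarith)
  have hn : ((d:ℝ) - 2)/2 ≤ gr (((d:ℝ) - 1)/2) ^ 2 := by
    have := gr_sq_ge (x := ((d:ℝ) - 1)/2) (by linarith)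
    linarith
  have hdd : gr ((d:ℝ) - 1) ^ 2 ≤ (d:ℝ) - 1 := gr_sq_le (by linarith)
  have hsq : ((d:ℝ) - 2) / (2 * ((d:ℝ) - 1)) ≤ rr d ^ 2 := by
    unfold rr
    rw [div_pow]
    calc ((d:ℝ) - 2) / (2 * ((d:ℝ) - 1))
        = (((d:ℝ) - 2)/2) / ((d:ℝ) - 1) := by
          rw [div_div]
      _ ≤ gr (((d:ℝ) - 1)/2) ^ 2 / gr ((d:ℝ) - 1) ^ 2 := by
          apply div_le_div₀ (by positivity) hn (by positivity) hdd
  calc Real.sqrt (((d:ℝ) - 2) / (2 * ((d:ℝ) - 1))) ≤ Real.sqrt (rr d ^ 2) :=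
        Real.sqrt_le_sqrt hsq
    _ = rr d := Real.sqrt_sq (rr_pos hd).le

lemma tendsto_rr : Filter.Tendsto rr Filter.atTop (nhds (Real.sqrt 2)⁻¹) := by
  have hinv2 : (Real.sqrt 2)⁻¹ = Real.sqrt (1/2) := by
    rw [one_div, Real.sqrt_inv]
  rw [hinv2]
  have hc2 : Filter.Tendsto (fun d : ℕ => (2:ℝ)/d) Filter.atTop (nhds 0) :=
    tendsto_const_div_atTop_nhds_zero_nat 2
  have hc1 : Filter.Tendsto (fun d : ℕ => (1:ℝ)/d) Filter.atTop (nhds 0) :=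
    tendsto_const_div_atTop_nhds_zero_nat 1
  have hc3 : Filter.Tendsto (fun d : ℕ => (3:ℝ)/d) Filter.atTop (nhds 0) :=
    tendsto_const_div_atTop_nhds_zero_nat 3
  have hL0 : Filter.Tendsto (fun d : ℕ => (1 - 2/(d:ℝ)) / (2 - 2/(d:ℝ)))
      Filter.atTop (nhds (1/2)) := by
    have := (tendsto_const_nhds (x := (1:ℝ)) (f := Filter.atTop)).sub hc2
    have h2 := (tendsto_const_nhds (x := (2:ℝ)) (f := Filter.atTop)).sub hc2
    have := this.div h2 (by norm_num)
    convert this using 2 <;> norm_num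
  have hU0 : Filter.Tendsto (fun d : ℕ => (1 - 1/(d:ℝ)) / (2 - 3/(d:ℝ)))
      Filter.atTop (nhds (1/2)) := by
    have := (tendsto_const_nhds (x := (1:ℝ)) (f := Filter.atTop)).sub hc1
    have h2 := (tendsto_const_nhds (x := (2:ℝ)) (f := Filter.atTop)).sub hc3
    have := this.div h2 (by norm_num)
    convert this using 2 <;> norm_num
  have hL : Filter.Tendsto (fun d : ℕ => ((d:ℝ) - 2) / (2 * ((d:ℝ) - 1)))
      Filter.atTop (nhds (1/2)) := by
    refine hL0.congr' ?_
    filter_upwards [Filter.eventually_ge_atTop 3] with d hd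
    have h1 : (3:ℝ) ≤ (d:ℝ) := by exact_mod_cast hd
    have hd0 : (d:ℝ) ≠ 0 := by linarith
    field_simp
  have hU : Filter.Tendsto (fun d : ℕ => ((d:ℝ) - 1) / (2 * (d:ℝ) - 3))
      Filter.atTop (nhds (1/2)) := by
    refine hU0.congr' ?_
    filter_upwards [Filter.eventually_ge_atTop 3] with d hd
    have h1 : (3:ℝ) ≤ (d:ℝ) := by exact_mod_cast hd
    have hd0 : (d:ℝ) ≠ 0 := by linarith
    field_simp
  have hsL : Filter.Tendsto (fun d : ℕ => Real.sqrt (((d:ℝ) - 2) / (2 * ((d:ℝ) - 1))))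
      Filter.atTop (nhds (Real.sqrt (1/2))) :=
    (Real.continuous_sqrt.tendsto _).comp hL
  have hsU : Filter.Tendsto (fun d : ℕ => Real.sqrt (((d:ℝ) - 1) / (2 * (d:ℝ) - 3)))
      Filter.atTop (nhds (Real.sqrt (1/2))) :=
    (Real.continuous_sqrt.tendsto _).comp hU
  refine tendsto_of_tendsto_of_tendsto_of_le_of_le' hsL hsU ?_ ?_
  · filter_upwards [Filter.eventually_ge_atTop 3] with d hd
    exact sqrt_le_rr hd
  · filter_upwards [Filter.eventually_ge_atTop 3] with d hd
    exact rr_le_sqrt hd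

lemma ptilde_rr {d : ℕ} (hd : 3 ≤ d) : ptilde d = (1 + rr d)⁻¹ := by
  unfold ptilde
  rw [ptilde_eq_rr hd]

lemma rr_mono : ∀ d e : ℕ, 3 ≤ d → d < e → rr d < rr e := by
  intro d e hd hde
  induction e with
  | zero => omega
  | succ n ih =>
    rcases Nat.lt_succ_iff_lt_or_eq.mp hde with h | h
    · exact (ih h).trans (rr_lt (by omega))
    · subst h; exact rr_lt hd

end Helpers

theorem stmt13 :
    (∀ d e : ℕ, 3 ≤ d → d < e → ptilde e < ptilde d) ∧
    ptilde 3 = 3 / 5 ∧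
    Filter.Tendsto ptilde Filter.atTop (nhds (1 + 1 / Real.sqrt 2)⁻¹) := by
  refine ⟨?_, ?_, ?_⟩
  · intro d e hd hde
    rw [ptilde_rr hd, ptilde_rr (by omega)]
    have h1 : 0 < 1 + rr d := by linarith [rr_pos hd]
    exact inv_strictAnti₀ h1 (by linarith [rr_mono d e hd hde])
  · have h32 : Real.Gamma (3/2) = 1/2 * Real.Gamma (1/2) := by
      rw [show (3/2:ℝ) = 1/2 + 1 by norm_num, Real.Gamma_add_one (by norm_num)]
    have hΓh : (0:ℝ) < Real.Gamma (1/2) := Real.Gamma_pos_of_pos (by norm_num)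
    have hB2 : Beta 2 (1/2) = 4/3 := by
      unfold Beta
      rw [show (2:ℝ) + 1/2 = 3/2 + 1 by norm_num, Real.Gamma_add_one (by norm_num),
        h32, Real.Gamma_two]
      field_simp
      ring
    have hB1 : Beta 1 (1/2) = 2 := by
      unfold Beta
      rw [show (1:ℝ) + 1/2 = 3/2 by norm_num, h32, Real.Gamma_one]
      field_simp
    have h3 : ptilde 3 = (1 + Beta 2 (1/2) / Beta 1 (1/2))⁻¹ := by
      norm_num [ptilde]
    rw [h3, hB2, hB1]
    norm_num
  · have hlim0 : Filter.Tendsto (fun d : ℕ => (1 + rr d)⁻¹) Filter.atTop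
        (nhds (1 + 1 / Real.sqrt 2)⁻¹) := by
      have h2 : (0:ℝ) < Real.sqrt 2 := by positivity
      have hne : (1 + (Real.sqrt 2)⁻¹) ≠ 0 := by positivity
      have h := ((tendsto_const_nhds (x := (1:ℝ)) (f := Filter.atTop)).add tendsto_rr).inv₀ hne
      simpa [one_div] using h
    refine Filter.Tendsto.congr' ?_ hlim0
    filter_upwards [Filter.eventually_ge_atTop 3] with d hd
    exact (ptilde_rr hd).symm
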